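/- Let G be a graph on n vertices with maximum degree at most Δ ≥ 3, let λ > 0, and let Y be the size of an independent set drawn from the hard-core model on G at fugacity λ. If for every vertex v and every independent set J in the graph induced on vertices at distance ≥ 2 from a fixed 4-separated set S with |S| = s, the conditional distribution of Y decomposes as |J| plus a sum of s independent random variables each with P[X_j = 0] ≥ a and P[X_j = 1] ≥ bλ, then |E[e^{−itY}]| ≤ exp(−(ab λ/8)·s·t²/(1+λ)) for all t ∈ [−π, π]. -/

import Mathlib

open MeasureTheory ProbabilityTheory Real Complex
open scoped ProbabilityTheory

section Aux
variable {Ω : Type*} [MeasurableSpace Ω]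

lemma stmt7_meas_cexp (t : ℝ) (g : Ω → ℤ) (hg : Measurable g) :
    Measurable fun ω => Complex.exp (-(Complex.I * t * g ω)) :=
  (measurable_from_top (f := fun n : ℤ => Complex.exp (-(Complex.I * t * n)))).comp hg

lemma stmt7_norm_cexp' (t : ℝ) (z : ℂ) (hz : z.im = 0) :
    ‖Complex.exp (-(Complex.I * t * z))‖ = 1 := by
  rw [Complex.norm_exp]
  simp [hz]

lemma stmt7_norm_cexp (t : ℝ) (n : ℤ) : ‖Complex.exp (-(Complex.I * t * n))‖ = 1 :=
  stmt7_norm_cexp' t n (by simp)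

lemma stmt7_integrable_cexp (μ : Measure Ω) [IsFiniteMeasure μ] (t : ℝ) (g : Ω → ℤ)
    (hg : Measurable g) :
    Integrable (fun ω => Complex.exp (-(Complex.I * t * g ω))) μ := by
  refine Integrable.mono' (integrable_const 1) (stmt7_meas_cexp t g hg).aestronglyMeasurable ?_
  filter_upwards with ω
  rw [stmt7_norm_cexp]

end Aux

section Aux2
variable {Ω : Type*} [MeasurableSpace Ω]

lemma stmt7_indep_mul (μ : Measure Ω) [IsFiniteMeasure μ] (t : ℝ)
    (f g : Ω → ℤ) (hf : Measurable f) (hg : Measurable g) (h : IndepFun f g μ) :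
    ∫ ω, Complex.exp (-(Complex.I * t * ((f ω + g ω : ℤ) : ℂ))) ∂μ
      = (∫ ω, Complex.exp (-(Complex.I * t * f ω)) ∂μ)
        * ∫ ω, Complex.exp (-(Complex.I * t * g ω)) ∂μ := by
  set c : ℤ → ℝ := fun n => (Complex.exp (-(Complex.I * t * n))).re with hc
  set s : ℤ → ℝ := fun n => (Complex.exp (-(Complex.I * t * n))).im with hs
  have hcm : Measurable c := measurable_from_top
  have hsm : Measurable s := measurable_from_top
  have hb : ∀ (p : ℤ → ℝ) (u : Ω → ℤ), Measurable u → Measurable p →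
      (∀ n, |p n| ≤ 1) → Integrable (fun ω => p (u ω)) μ := by
    intro p u hu hp hple
    refine Integrable.mono' (integrable_const 1) ((hp.comp hu).aestronglyMeasurable) ?_
    filter_upwards with ω
    simpa using hple (u ω)
  have hcb : ∀ n : ℤ, |c n| ≤ 1 := fun n => by
    have h1 := Complex.abs_re_le_norm (Complex.exp (-(Complex.I * t * n)))
    rwa [stmt7_norm_cexp t n] at h1
  have hsb : ∀ n : ℤ, |s n| ≤ 1 := fun n => by
    have h1 := Complex.abs_im_le_norm (Complex.exp (-(Complex.I * t * n)))
    rwa [stmt7_norm_cexp t n] at h1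
  have hicf := hb c f hf hcm hcb
  have hisf := hb s f hf hsm hsb
  have hicg := hb c g hg hcm hcb
  have hisg := hb s g hg hsm hsb
  -- expansion of an integral of the form re + im*I
  have expand : ∀ (p q : Ω → ℝ), Integrable p μ → Integrable q μ →
      ∫ ω, ((p ω : ℂ) + (q ω : ℂ) * Complex.I) ∂μ
        = ((∫ ω, p ω ∂μ : ℝ) : ℂ) + ((∫ ω, q ω ∂μ : ℝ) : ℂ) * Complex.I := by
    intro p q hp hq
    have h1 : Integrable (fun ω => ((p ω : ℝ) : ℂ)) μ := hp.ofReal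
    have h2 : Integrable (fun ω => ((q ω : ℝ) : ℂ) * Complex.I) μ := hq.ofReal.mul_const _
    have e1 : ∫ ω, ((p ω : ℝ) : ℂ) ∂μ = ((∫ ω, p ω ∂μ : ℝ) : ℂ) := integral_ofReal
    have e2 : ∫ ω, ((q ω : ℝ) : ℂ) ∂μ = ((∫ ω, q ω ∂μ : ℝ) : ℂ) := integral_ofReal
    rw [integral_add h1 h2, integral_mul_const, e1, e2]
  -- pointwise decompositions
  have hF : (fun ω => Complex.exp (-(Complex.I * t * ((f ω + g ω : ℤ) : ℂ))))
      = fun ω => ((c (f ω) * c (g ω) - s (f ω) * s (g ω) : ℝ) : ℂ)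
        + ((c (f ω) * s (g ω) + s (f ω) * c (g ω) : ℝ) : ℂ) * Complex.I := by
    funext ω
    have hsplit : Complex.exp (-(Complex.I * t * ((f ω + g ω : ℤ) : ℂ)))
        = Complex.exp (-(Complex.I * t * (f ω : ℂ))) * Complex.exp (-(Complex.I * t * (g ω : ℂ))) := by
      rw [← Complex.exp_add]
      push_cast
      ring_nf
    rw [hsplit, ← Complex.re_add_im (Complex.exp (-(Complex.I * t * (f ω : ℂ)))),
      ← Complex.re_add_im (Complex.exp (-(Complex.I * t * (g ω : ℂ))))]
    push_cast
    have : Complex.I * Complex.I = -1 := Complex.I_mul_I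
    set A := (c (f ω) : ℂ); set B := (s (f ω) : ℂ); set C := (c (g ω) : ℂ); set D := (s (g ω) : ℂ)
    linear_combination (B * D) * this
  have hcc : ∫ ω, c (f ω) * c (g ω) ∂μ = (∫ ω, c (f ω) ∂μ) * ∫ ω, c (g ω) ∂μ :=
    (h.comp hcm hcm).integral_fun_mul_eq_mul_integral hicf.aestronglyMeasurable hicg.aestronglyMeasurable
  have hss : ∫ ω, s (f ω) * s (g ω) ∂μ = (∫ ω, s (f ω) ∂μ) * ∫ ω, s (g ω) ∂μ :=
    (h.comp hsm hsm).integral_fun_mul_eq_mul_integral hisf.aestronglyMeasurable hisg.aestronglyMeasurable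
  have hcs : ∫ ω, c (f ω) * s (g ω) ∂μ = (∫ ω, c (f ω) ∂μ) * ∫ ω, s (g ω) ∂μ :=
    (h.comp hcm hsm).integral_fun_mul_eq_mul_integral hicf.aestronglyMeasurable hisg.aestronglyMeasurable
  have hsc : ∫ ω, s (f ω) * c (g ω) ∂μ = (∫ ω, s (f ω) ∂μ) * ∫ ω, c (g ω) ∂μ :=
    (h.comp hsm hcm).integral_fun_mul_eq_mul_integral hisf.aestronglyMeasurable hicg.aestronglyMeasurable
  have hFf : (fun ω => Complex.exp (-(Complex.I * t * (f ω : ℂ))))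
      = fun ω => ((c (f ω) : ℝ) : ℂ) + ((s (f ω) : ℝ) : ℂ) * Complex.I := by
    funext ω; exact (Complex.re_add_im _).symm
  have hFg : (fun ω => Complex.exp (-(Complex.I * t * (g ω : ℂ))))
      = fun ω => ((c (g ω) : ℝ) : ℂ) + ((s (g ω) : ℝ) : ℂ) * Complex.I := by
    funext ω; exact (Complex.re_add_im _).symm
  have hbp : ∀ (p q : ℤ → ℝ), Measurable p → Measurable q → (∀ n, |p n| ≤ 1) →
      (∀ n, |q n| ≤ 1) → Integrable (fun ω => p (f ω) * q (g ω)) μ := by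
    intro p q hp hq hp1 hq1
    refine Integrable.mono' (integrable_const 1)
      (((hp.comp hf).mul (hq.comp hg)).aestronglyMeasurable) ?_
    filter_upwards with ω
    rw [norm_mul]
    calc ‖p (f ω)‖ * ‖q (g ω)‖ ≤ 1 * 1 := by
          gcongr <;> simp [Real.norm_eq_abs, hp1 _, hq1 _, abs_nonneg]
      _ = 1 := by ring
  have i1 : Integrable (fun ω => c (f ω) * c (g ω) - s (f ω) * s (g ω)) μ :=
    (hbp c c hcm hcm hcb hcb).sub (hbp s s hsm hsm hsb hsb)
  have i2 : Integrable (fun ω => c (f ω) * s (g ω) + s (f ω) * c (g ω)) μ :=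
    (hbp c s hcm hsm hcb hsb).add (hbp s c hsm hcm hsb hcb)
  have e3 : ∫ ω, (((c (f ω) * c (g ω) - s (f ω) * s (g ω) : ℝ) : ℂ)
        + ((c (f ω) * s (g ω) + s (f ω) * c (g ω) : ℝ) : ℂ) * Complex.I) ∂μ
      = ((∫ ω, (c (f ω) * c (g ω) - s (f ω) * s (g ω)) ∂μ : ℝ) : ℂ)
        + ((∫ ω, (c (f ω) * s (g ω) + s (f ω) * c (g ω)) ∂μ : ℝ) : ℂ) * Complex.I :=
    expand _ _ i1 i2
  have e4 : ∫ ω, (((c (f ω) : ℝ) : ℂ) + ((s (f ω) : ℝ) : ℂ) * Complex.I) ∂μ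
      = ((∫ ω, c (f ω) ∂μ : ℝ) : ℂ) + ((∫ ω, s (f ω) ∂μ : ℝ) : ℂ) * Complex.I :=
    expand _ _ hicf hisf
  have e5 : ∫ ω, (((c (g ω) : ℝ) : ℂ) + ((s (g ω) : ℝ) : ℂ) * Complex.I) ∂μ
      = ((∫ ω, c (g ω) ∂μ : ℝ) : ℂ) + ((∫ ω, s (g ω) ∂μ : ℝ) : ℂ) * Complex.I :=
    expand _ _ hicg hisg
  rw [hF, hFf, hFg, e3, e4, e5,
    integral_sub (hbp c c hcm hcm hcb hcb) (hbp s s hsm hsm hsb hsb),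
    integral_add (hbp c s hcm hsm hcb hsb) (hbp s c hsm hcm hsb hcb),
    hcc, hss, hcs, hsc]
  push_cast
  have hI : Complex.I * Complex.I = -1 := Complex.I_mul_I
  set A := ((∫ ω, c (f ω) ∂μ : ℝ) : ℂ); set B := ((∫ ω, s (f ω) ∂μ : ℝ) : ℂ)
  set C := ((∫ ω, c (g ω) ∂μ : ℝ) : ℂ); set D := ((∫ ω, s (g ω) ∂μ : ℝ) : ℂ)
  linear_combination (-(B * D)) * hI

end Aux2

lemma stmt7_cexp_sum {Ω : Type*} [MeasurableSpace Ω] (μ : Measure Ω) [IsProbabilityMeasure μ]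
    (t : ℝ) {n : ℕ} (X : Fin n → Ω → ℤ) (hX : ∀ j, Measurable (X j))
    (hind : iIndepFun X μ) (u : Finset (Fin n)) :
    ∫ ω, Complex.exp (-(Complex.I * t * ((∑ j ∈ u, X j ω : ℤ) : ℂ))) ∂μ
      = ∏ j ∈ u, ∫ ω, Complex.exp (-(Complex.I * t * X j ω)) ∂μ := by
  classical
  induction u using Finset.induction_on with
  | empty => simp
  | @insert i u hi ih =>
      have hsum : Measurable (fun ω => ∑ j ∈ u, X j ω) :=
        Finset.measurable_sum u (fun j _ => hX j)
      have hindep : IndepFun (X i) (fun ω => ∑ j ∈ u, X j ω) μ := by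
        have := (hind.indepFun_finsetSum_of_notMem hX hi).symm
        convert this using 1
        funext ω
        simp [Finset.sum_apply]
      have key := stmt7_indep_mul μ t (X i) (fun ω => ∑ j ∈ u, X j ω) (hX i) hsum hindep
      simp only [Finset.sum_insert hi, Finset.prod_insert hi, ← ih]
      exact key

lemma stmt7_factor_bound {Ω : Type*} [MeasurableSpace Ω] (μ : Measure Ω) [IsProbabilityMeasure μ]
    (t : ℝ) (X : Ω → ℤ) (hX : Measurable X) :
    ‖∫ ω, Complex.exp (-(Complex.I * t * X ω)) ∂μ‖
      ≤ 1 - (μ {ω | X ω = 0}).toReal * (μ {ω | X ω = 1}).toReal * (1 - Real.cos t) := by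
  classical
  set A : Set Ω := {ω | X ω = 0} with hA
  set B : Set Ω := {ω | X ω = 1} with hB
  have hmA : MeasurableSet A := hX (measurableSet_singleton 0)
  have hmB : MeasurableSet B := hX (measurableSet_singleton 1)
  have hdisj : Disjoint A B := by
    rw [Set.disjoint_left]
    intro ω h0 h1
    simp only [hA, hB, Set.mem_setOf_eq] at h0 h1
    omega
  set p0 : ℝ := (μ A).toReal with hp0
  set p1 : ℝ := (μ B).toReal with hp1
  have hp0n : 0 ≤ p0 := ENNReal.toReal_nonneg
  have hp1n : 0 ≤ p1 := ENNReal.toReal_nonneg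
  have hw0 : 0 ≤ 1 - Real.cos t := by nlinarith [Real.cos_le_one t]
  have hw2 : 1 - Real.cos t ≤ 2 := by nlinarith [Real.neg_one_le_cos t]
  set w : ℝ := 1 - Real.cos t with hwdef
  have hInt : Integrable (fun ω => Complex.exp (-(Complex.I * t * X ω))) μ :=
    stmt7_integrable_cexp μ t X hX
  -- measure of union
  have hABm : μ (A ∪ B) = μ A + μ B := measure_union hdisj hmB
  have hABfin : μ (A ∪ B) ≠ ⊤ := measure_ne_top _ _
  have hAfin : μ A ≠ ⊤ := measure_ne_top _ _
  have hBfin : μ B ≠ ⊤ := measure_ne_top _ _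
  have hsum_le : p0 + p1 ≤ 1 := by
    rw [hp0, hp1, ← ENNReal.toReal_add hAfin hBfin, ← hABm]
    exact ENNReal.toReal_le_of_le_ofReal one_pos.le (by simpa using prob_le_one (μ := μ) (s := A ∪ B))
  -- split the integral
  have hsplit : ∫ ω, Complex.exp (-(Complex.I * t * X ω)) ∂μ
      = (∫ ω in A ∪ B, Complex.exp (-(Complex.I * t * X ω)) ∂μ)
        + ∫ ω in (A ∪ B)ᶜ, Complex.exp (-(Complex.I * t * X ω)) ∂μ :=
    (integral_add_compl (hmA.union hmB) hInt).symm
  have hunion : ∫ ω in A ∪ B, Complex.exp (-(Complex.I * t * X ω)) ∂μ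
      = (∫ ω in A, Complex.exp (-(Complex.I * t * X ω)) ∂μ)
        + ∫ ω in B, Complex.exp (-(Complex.I * t * X ω)) ∂μ :=
    setIntegral_union hdisj hmB hInt.integrableOn hInt.integrableOn
  have hAint : ∫ ω in A, Complex.exp (-(Complex.I * t * X ω)) ∂μ = (p0 : ℂ) := by
    rw [setIntegral_congr_fun hmA (g := fun _ => (1 : ℂ)) ?_]
    · simp [hp0, Measure.restrict_apply_univ, Measure.real]
    · intro ω hω
      simp only [hA, Set.mem_setOf_eq] at hω
      simp [hω]
  have hBint : ∫ ω in B, Complex.exp (-(Complex.I * t * X ω)) ∂μ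
      = (p1 : ℂ) * Complex.exp (-(Complex.I * t)) := by
    rw [setIntegral_congr_fun hmB (g := fun _ => Complex.exp (-(Complex.I * t))) ?_]
    · simp [hp1, Measure.restrict_apply_univ, smul_eq_mul, Measure.real]
    · intro ω hω
      simp only [hB, Set.mem_setOf_eq] at hω
      simp [hω]
  have hCnorm : ‖∫ ω in (A ∪ B)ᶜ, Complex.exp (-(Complex.I * t * X ω)) ∂μ‖
      ≤ 1 - (p0 + p1) := by
    have h1 : ‖∫ ω in (A ∪ B)ᶜ, Complex.exp (-(Complex.I * t * X ω)) ∂μ‖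
        ≤ 1 * (μ (A ∪ B)ᶜ).toReal := by
      refine norm_setIntegral_le_of_norm_le_const (measure_lt_top _ _) ?_
      · intro ω _
        rw [stmt7_norm_cexp]
    have h2 : (μ (A ∪ B)ᶜ).toReal = 1 - (p0 + p1) := by
      rw [measure_compl (hmA.union hmB) hABfin, measure_univ, hABm]
      rw [ENNReal.toReal_sub_of_le (by simpa [← hABm] using prob_le_one (μ := μ) (s := A ∪ B))
        (by simp), ENNReal.toReal_add hAfin hBfin]
      simp [hp0, hp1]
    linarith [h1, h2.le, h2.ge]
  -- norm of the main term
  have hmain : ‖(p0 : ℂ) + (p1 : ℂ) * Complex.exp (-(Complex.I * t))‖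
      ≤ (p0 + p1) - p0 * p1 * w := by
    have hz : Complex.exp (-(Complex.I * t)) = Complex.exp (((-t : ℝ) : ℂ) * Complex.I) := by
      push_cast; ring_nf
    have hre : (Complex.exp (-(Complex.I * t))).re = Real.cos t := by
      rw [hz, Complex.exp_ofReal_mul_I_re, Real.cos_neg]
    have him : (Complex.exp (-(Complex.I * t))).im = -Real.sin t := by
      rw [hz, Complex.exp_ofReal_mul_I_im, Real.sin_neg]
    have hnormsq : Complex.normSq ((p0 : ℂ) + (p1 : ℂ) * Complex.exp (-(Complex.I * t)))
        = p0 ^ 2 + 2 * p0 * p1 * Real.cos t + p1 ^ 2 := by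
      rw [Complex.normSq_apply]
      simp only [Complex.add_re, Complex.add_im, Complex.mul_re, Complex.mul_im,
        Complex.ofReal_re, Complex.ofReal_im, hre, him]
      nlinarith [Real.sin_sq_add_cos_sq t]
    rw [Complex.norm_def, hnormsq]
    have hvw0 : 0 ≤ p0 * p1 * w := by positivity
    have h4 : 4 * (p0 * p1) ≤ (p0 + p1) ^ 2 := by nlinarith [sq_nonneg (p0 - p1)]
    have h5 : (p0 + p1) ^ 2 ≤ p0 + p1 := by nlinarith [add_nonneg hp0n hp1n]
    have h6 : p0 * p1 * w ≤ 2 * (p0 * p1) := by nlinarith [mul_nonneg hp0n hp1n]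
    have hnonneg : 0 ≤ (p0 + p1) - p0 * p1 * w := by linarith
    have h7 : 0 ≤ (p0 * p1 * w) * (p0 * p1 * w + 2 - 2 * (p0 + p1)) :=
      mul_nonneg hvw0 (by linarith)
    have hsqle : p0 ^ 2 + 2 * p0 * p1 * Real.cos t + p1 ^ 2
        ≤ ((p0 + p1) - p0 * p1 * w) ^ 2 := by
      rw [show Real.cos t = 1 - w by rw [hwdef]; ring]
      nlinarith [h7]
    calc Real.sqrt (p0 ^ 2 + 2 * p0 * p1 * Real.cos t + p1 ^ 2)
        ≤ Real.sqrt (((p0 + p1) - p0 * p1 * w) ^ 2) := Real.sqrt_le_sqrt hsqle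
      _ = (p0 + p1) - p0 * p1 * w := by rw [Real.sqrt_sq hnonneg]
  calc ‖∫ ω, Complex.exp (-(Complex.I * t * X ω)) ∂μ‖
      ≤ ‖(p0 : ℂ) + (p1 : ℂ) * Complex.exp (-(Complex.I * t))‖
        + ‖∫ ω in (A ∪ B)ᶜ, Complex.exp (-(Complex.I * t * X ω)) ∂μ‖ := by
        rw [hsplit, hunion, hAint, hBint]
        exact norm_add_le _ _
    _ ≤ ((p0 + p1) - p0 * p1 * w) + (1 - (p0 + p1)) := add_le_add hmain hCnorm
    _ = 1 - p0 * p1 * w := by ring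


/-- High-phase bound for the hard-core model: if `Y` (the size of a hard-core independent set
at fugacity `λ` on a graph with a 4-separated set `S` of size `s`) decomposes, conditionally on
the configuration `J` away from `S`, as a constant plus a sum of `s` independent integer random
variables with `P[X_j = 0] ≥ a` and `P[X_j = 1] ≥ bλ`, then
`|E[e^{-itY}]| ≤ exp(-(abλ/8)·s·t²/(1+λ))` for all `t ∈ [-π, π]`. -/
theorem stmt7 {Ω : Type*} [MeasureSpace Ω] [IsProbabilityMeasure (ℙ : Measure Ω)]
    {ι : Type*} [Fintype ι] [MeasurableSpace ι] [MeasurableSingletonClass ι]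
    (J : Ω → ι) (hJ : Measurable J) (Y : Ω → ℤ) (hY : Measurable Y)
    (s : ℕ) (a b lam : ℝ) (ha : 0 < a) (hb : 0 < b) (hlam : 0 < lam)
    (hdecomp : ∀ i : ι, ℙ {ω | J ω = i} ≠ 0 →
      ∃ (c : ℤ) (X : Fin s → Ω → ℤ),
        (∀ j, Measurable (X j)) ∧
        iIndepFun X (ℙ[|{ω | J ω = i}]) ∧
        (∀ ω ∈ {ω | J ω = i}, Y ω = c + ∑ j, X j ω) ∧
        (∀ j, a ≤ ((ℙ[|{ω | J ω = i}]) {ω | X j ω = 0}).toReal) ∧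
        (∀ j, b * lam ≤ ((ℙ[|{ω | J ω = i}]) {ω | X j ω = 1}).toReal)) :
    ∀ t ∈ Set.Icc (-Real.pi) Real.pi,
      ‖∫ ω, Complex.exp (-(Complex.I * t * Y ω))‖
        ≤ Real.exp (-(a * b * lam / 8) * s * t ^ 2 / (1 + lam)) := by
  classical
  intro t ht
  set w : ℝ := 1 - Real.cos t with hwdef
  have hw0 : 0 ≤ w := by have := Real.cos_le_one t; simp only [hwdef]; linarith
  have habl : 0 < a * (b * lam) := by positivity
  -- quadratic lower bound on w
  have hwq : t ^ 2 / (8 * (1 + lam)) ≤ w := by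
    have htabs : |t| ≤ Real.pi := abs_le.mpr ⟨ht.1, ht.2⟩
    have hcos := Real.cos_le_one_sub_mul_cos_sq htabs
    have hpi : Real.pi ≤ 4 := Real.pi_le_four
    have hpi0 : 0 < Real.pi := Real.pi_pos
    have hpisq : Real.pi ^ 2 ≤ 16 := by nlinarith
    have h2 : 0 < Real.pi ^ 2 := by positivity
    have h1 : t ^ 2 / 8 ≤ 2 / Real.pi ^ 2 * t ^ 2 := by
      rw [div_le_iff₀ (by norm_num : (0:ℝ) < 8), ← sub_nonneg]
      have heq : 2 / Real.pi ^ 2 * t ^ 2 * 8 - t ^ 2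
          = t ^ 2 * (16 - Real.pi ^ 2) / Real.pi ^ 2 := by
        field_simp
        ring
      rw [heq]
      exact div_nonneg (mul_nonneg (sq_nonneg t) (by linarith)) h2.le
    have h3 : t ^ 2 / (8 * (1 + lam)) ≤ t ^ 2 / 8 := by
      gcongr
      · nlinarith
    simp only [hwdef]
    linarith
  set E : ℝ := Real.exp (-(a * b * lam / 8) * s * t ^ 2 / (1 + lam)) with hE
  have hE0 : 0 ≤ E := Real.exp_nonneg _
  set F : Ω → ℂ := fun ω => Complex.exp (-(Complex.I * t * Y ω)) with hF
  have hFmeas : Measurable F := stmt7_meas_cexp t Y hY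
  have hFint : Integrable F ℙ := stmt7_integrable_cexp ℙ t Y hY
  -- per-fiber bound
  have key : ∀ i : ι, ‖∫ ω in {ω | J ω = i}, F ω ∂ℙ‖ ≤ (ℙ {ω | J ω = i}).toReal * E := by
    intro i
    set Si : Set Ω := {ω | J ω = i} with hSi
    have hmSi : MeasurableSet Si := hJ (measurableSet_singleton i)
    by_cases hzero : ℙ Si = 0
    · rw [Measure.restrict_eq_zero.mpr hzero]
      simp [hzero]
    · obtain ⟨c, X, hXm, hind, hYeq, hX0, hX1⟩ := hdecomp i hzero
      set μi : Measure Ω := ℙ[|Si] with hμi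
      haveI : IsProbabilityMeasure μi := cond_isProbabilityMeasure hzero
      have hfin : ℙ Si ≠ ⊤ := measure_ne_top _ _
      have htne : (ℙ Si).toReal ≠ 0 := ENNReal.toReal_ne_zero.mpr ⟨hzero, hfin⟩
      -- relate set integral and conditional integral
      have h0 : ∫ ω, F ω ∂μi = ((ℙ Si)⁻¹).toReal • ∫ ω in Si, F ω ∂ℙ := by
        rw [hμi, ProbabilityTheory.cond, integral_smul_measure]
      have hcondint : ∫ ω in Si, F ω ∂ℙ = ((ℙ Si).toReal : ℂ) * ∫ ω, F ω ∂μi := by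
        rw [h0, Complex.real_smul, ← mul_assoc, ← Complex.ofReal_mul, ENNReal.toReal_inv,
          mul_inv_cancel₀ htne, Complex.ofReal_one, one_mul]
      rw [hcondint, norm_mul, Complex.norm_real, Real.norm_eq_abs,
        _root_.abs_of_nonneg ENNReal.toReal_nonneg]
      gcongr
      -- now bound the conditional characteristic function
      have hae : ∀ᵐ ω ∂μi, J ω = i := by
        rw [ae_iff]
        have : {ω | ¬J ω = i} = Siᶜ := rfl
        rw [this, hμi, cond_apply hmSi]
        simp
      have hcongr : ∫ ω, F ω ∂μi
          = ∫ ω, Complex.exp (-(Complex.I * t * ((c + ∑ j, X j ω : ℤ) : ℂ))) ∂μi := by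
        refine integral_congr_ae ?_
        filter_upwards [hae] with ω hω
        rw [hF]
        simp only []
        rw [hYeq ω hω]
      have hsplitc : ∀ ω, Complex.exp (-(Complex.I * t * ((c + ∑ j, X j ω : ℤ) : ℂ)))
          = Complex.exp (-(Complex.I * t * (c : ℂ)))
            * Complex.exp (-(Complex.I * t * ((∑ j, X j ω : ℤ) : ℂ))) := by
        intro ω
        rw [← Complex.exp_add]
        push_cast
        ring_nf
      rw [hcongr]
      simp only [hsplitc]
      rw [integral_const_mul, stmt7_cexp_sum μi t X hXm hind Finset.univ, norm_mul,
        stmt7_norm_cexp t c, one_mul, norm_prod]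
      have hfac : ∀ j : Fin s, ‖∫ ω, Complex.exp (-(Complex.I * t * X j ω)) ∂μi‖
          ≤ Real.exp (-(a * (b * lam) * w)) := by
        intro j
        have h1 := stmt7_factor_bound μi t (X j) (hXm j)
        have h2 : a * (b * lam) ≤ (μi {ω | X j ω = 0}).toReal * (μi {ω | X j ω = 1}).toReal :=
          mul_le_mul (hX0 j) (hX1 j) (by positivity) ENNReal.toReal_nonneg
        have h3 : a * (b * lam) * w ≤ (μi {ω | X j ω = 0}).toReal
            * (μi {ω | X j ω = 1}).toReal * w := by
          exact mul_le_mul_of_nonneg_right h2 hw0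
        have h4 : 1 - (μi {ω | X j ω = 0}).toReal * (μi {ω | X j ω = 1}).toReal * w
            ≤ Real.exp (-(a * (b * lam) * w)) := by
          have := Real.add_one_le_exp (-(a * (b * lam) * w))
          linarith
        calc ‖∫ ω, Complex.exp (-(Complex.I * t * X j ω)) ∂μi‖
            ≤ 1 - (μi {ω | X j ω = 0}).toReal * (μi {ω | X j ω = 1}).toReal * w := h1
          _ ≤ Real.exp (-(a * (b * lam) * w)) := h4
      calc ∏ j : Fin s, ‖∫ ω, Complex.exp (-(Complex.I * t * X j ω)) ∂μi‖
          ≤ ∏ _j : Fin s, Real.exp (-(a * (b * lam) * w)) :=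
            Finset.prod_le_prod (fun j _ => norm_nonneg _) (fun j _ => hfac j)
        _ = Real.exp (-(a * (b * lam) * w)) ^ s := by
            rw [Finset.prod_const, Finset.card_univ, Fintype.card_fin]
        _ = Real.exp ((s : ℝ) * (-(a * (b * lam) * w))) := (Real.exp_nat_mul _ s).symm
        _ ≤ E := by
            rw [hE, Real.exp_le_exp]
            have hC : (0:ℝ) ≤ a * (b * lam) * s := by positivity
            have hmul := mul_le_mul_of_nonneg_left hwq hC
            have hlam1 : (0:ℝ) < 1 + lam := by linarith
            have hre : -(a * b * lam / 8) * (s : ℝ) * t ^ 2 / (1 + lam)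
                = -(a * (b * lam) * s * (t ^ 2 / (8 * (1 + lam)))) := by
              rw [show t ^ 2 / (8 * (1 + lam)) = t ^ 2 / 8 / (1 + lam) from
                (div_div _ _ _).symm]
              ring
            rw [hre]
            nlinarith [hmul]
  -- sum over fibers
  have hsum : ∫ ω, F ω = ∑ i : ι, ∫ ω in {ω | J ω = i}, F ω ∂ℙ := by
    have hptw : ∀ ω, F ω = ∑ i : ι, Set.indicator {ω' | J ω' = i} F ω := by
      intro ω
      rw [Finset.sum_eq_single (J ω)]
      · rw [Set.indicator_of_mem (show ω ∈ {ω' | J ω' = J ω} from rfl) F]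
      · intro i _ hne
        refine Set.indicator_of_notMem ?_ F
        intro hmem
        exact hne ((show J ω = i from hmem).symm)
      · intro h
        exact absurd (Finset.mem_univ _) h
    calc ∫ ω, F ω = ∫ ω, ∑ i : ι, Set.indicator {ω' | J ω' = i} F ω := by
          exact integral_congr_ae (Filter.Eventually.of_forall hptw)
      _ = ∑ i : ι, ∫ ω, Set.indicator {ω' | J ω' = i} F ω :=
          integral_finset_sum _ (fun i _ => hFint.indicator (hJ (measurableSet_singleton i)))
      _ = ∑ i : ι, ∫ ω in {ω | J ω = i}, F ω ∂ℙ := by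
          refine Finset.sum_congr rfl (fun i _ => ?_)
          exact integral_indicator (hJ (measurableSet_singleton i))
  have hmass : ∑ i : ι, (ℙ {ω | J ω = i}).toReal = 1 := by
    have h1 : ∑ i : ι, ℙ (J ⁻¹' {i}) = ℙ (J ⁻¹' ↑(Finset.univ : Finset ι)) :=
      sum_measure_preimage_singleton Finset.univ (fun i _ => hJ (measurableSet_singleton i))
    have h2 : ∑ i : ι, (ℙ {ω | J ω = i}).toReal = (∑ i : ι, ℙ (J ⁻¹' {i})).toReal := by
      rw [ENNReal.toReal_sum (fun i _ => measure_ne_top _ _)]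
      rfl
    rw [h2, h1]
    simp
  calc ‖∫ ω, F ω‖ ≤ ∑ i : ι, ‖∫ ω in {ω | J ω = i}, F ω ∂ℙ‖ := by
        rw [hsum]; exact norm_sum_le _ _
    _ ≤ ∑ i : ι, (ℙ {ω | J ω = i}).toReal * E :=
        Finset.sum_le_sum (fun i _ => key i)
    _ = (∑ i : ι, (ℙ {ω | J ω = i}).toReal) * E := by rw [Finset.sum_mul]
    _ = E := by rw [hmass, one_mul]
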